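/- (Marginal split conformal coverage, Theorem 1.) Let N ≥ 1, let α ∈ (0, 1) satisfy ⌈(N+1)(1−α)⌉ ≤ N, and let S_1, …, S_N, S_{N+1} be real-valued random variables that are exchangeable and almost surely pairwise distinct. Define the conformal quantile q_α = S_{(⌈(N+1)(1−α)⌉)}, the ⌈(N+1)(1−α)⌉-th smallest of the calibration scores S_1, …, S_N. Then the event {S_{N+1} ≤ q_α} (equivalently, the event that the test point lies in the conformal prediction set) satisfies the tight probabilistic coverage bound 1 − α ≤ ℙ(S_{N+1} ≤ q_α) ≤ 1 − α + 1/(N+1). -/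

import Mathlib

open MeasureTheory
open scoped ENNReal

/-- The `k`-th smallest value (k = 1, …, m) among `v 0, …, v (m-1)`. -/
noncomputable def orderStat {m : ℕ} (v : Fin m → ℝ) (k : ℕ) : ℝ :=
  ((List.ofFn v).insertionSort (· ≤ ·)).getD (k - 1) 0

open scoped Classical in
/-- The number of strictly smaller entries. -/
noncomputable def rnk {m : ℕ} (v : Fin m → ℝ) (j : Fin m) : ℕ :=
  (Finset.univ.filter (fun i => v i < v j)).card

theorem sorted_getD_lt_iff (L : List ℝ) (hL : L.Pairwise (· ≤ ·)) (x : ℝ) (j : ℕ)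
    (hj : j < L.length) : L.getD j 0 < x ↔ j < L.countP (fun y => decide (y < x)) := by
  have mono : ∀ a b (ha : a < L.length) (hb : b < L.length), a ≤ b → L[a] ≤ L[b] := by
    intro a b ha hb hab
    rcases Nat.eq_or_lt_of_le hab with rfl | h'
    · exact le_refl _
    · simpa using hL.rel_get_of_lt (a := ⟨a, ha⟩) (b := ⟨b, hb⟩) h'
  rw [List.getD_eq_getElem?_getD, List.getElem?_eq_getElem hj]
  simp only [Option.getD_some]
  constructor
  · intro h
    have h1 : j + 1 ≤ (L.take (j+1)).countP (fun y => decide (y < x)) := by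
      rw [List.countP_eq_length.2, List.length_take]
      · omega
      · intro a ha
        obtain ⟨i, hi, rfl⟩ := List.mem_iff_getElem.1 ha
        have hi' : i < L.length := lt_of_lt_of_le hi (by simp)
        have hij : i ≤ j := by simp [List.length_take] at hi; omega
        rw [List.getElem_take]
        exact decide_eq_true (lt_of_le_of_lt (mono i j hi' hj hij) h)
    calc j < j + 1 := by omega
    _ ≤ _ := h1.trans ((List.take_sublist _ _).countP_le)
  · intro h
    by_contra hcon
    push_neg at hcon
    have : L.countP (fun y => decide (y < x)) ≤ j := by
      have hsplit : L.countP (fun y => decide (y < x))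
          = (L.take j).countP (fun y => decide (y < x))
            + (L.drop j).countP (fun y => decide (y < x)) := by
        conv_lhs => rw [← L.take_append_drop j]
        exact List.countP_append
      have h0 : (L.drop j).countP (fun y => decide (y < x)) = 0 := by
        apply List.countP_eq_zero.2
        intro a ha
        obtain ⟨i, hi, rfl⟩ := List.mem_iff_getElem.1 ha
        rw [List.getElem_drop]
        have hd : j + i < L.length := by simp [List.length_drop] at hi; omega
        simp only [decide_eq_true_eq, not_lt]
        exact hcon.trans (mono j (j + i) hj (by simp [List.length_drop] at hi; omega) (by omega))
      rw [hsplit, h0, Nat.add_zero]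
      exact ((L.take j).countP_le_length).trans (by simp [List.length_take])
    omega

theorem le_orderStat_iff {N : ℕ} (v : Fin (N + 1) → ℝ) (k : ℕ) (hk1 : 1 ≤ k) (hk2 : k ≤ N) :
    (v (Fin.last N) ≤ orderStat (fun i : Fin N => v i.castSucc) k
      ↔ rnk v (Fin.last N) < k) := by
  classical
  set w : Fin N → ℝ := fun i => v i.castSucc with hw
  set x : ℝ := v (Fin.last N) with hx
  set L : List ℝ := (List.ofFn w).insertionSort (· ≤ ·) with hLdef
  have hL : L.Pairwise (· ≤ ·) := List.pairwise_insertionSort _ _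
  have hlen : L.length = N := by
    rw [hLdef, List.length_insertionSort, List.length_ofFn]
  have hcount : L.countP (fun y => decide (y < x)) = rnk v (Fin.last N) := by
    rw [hLdef, (List.perm_insertionSort _ _).countP_eq]
    have h1 : (List.ofFn w).countP (fun y => decide (y < x))
        = (Finset.univ.filter (fun i : Fin N => w i < x)).card := by
      rw [List.ofFn_eq_map, List.countP_map, List.countP_eq_length_filter]
      rw [Fin.univ_def]
      simp only [Finset.filter, Finset.card, Multiset.filter_coe, Multiset.coe_card]
      rfl

    rw [h1, rnk]
    rw [Finset.card_filter, Finset.card_filter, Fin.sum_univ_castSucc]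
    simp
    convert rfl
  have hj : k - 1 < L.length := by omega
  rw [orderStat, ← hLdef]
  rw [← not_lt, sorted_getD_lt_iff L hL x (k-1) hj, hcount, not_lt]
  omega

theorem rnk_lt_rnk {m : ℕ} (v : Fin m → ℝ) {i j : Fin m} (hij : v i < v j) :
    rnk v i < rnk v j := by
  classical
  apply Finset.card_lt_card
  constructor
  · intro a ha
    simp only [Finset.mem_filter, Finset.mem_univ, true_and] at *
    exact ha.trans hij
  · intro hsub
    have : i ∈ Finset.univ.filter (fun a => v a < v j) := by simp [hij]
    have h2 := hsub this
    simp at h2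

theorem rnk_lt {m : ℕ} (v : Fin m → ℝ) (j : Fin m) : rnk v j < m := by
  classical
  have h1 : Finset.univ.filter (fun i => v i < v j) ⊆ Finset.univ.erase j := by
    intro a ha
    simp only [Finset.mem_filter, Finset.mem_univ, true_and] at ha
    simp only [Finset.mem_erase, Finset.mem_univ, and_true]
    rintro rfl; exact absurd ha (lt_irrefl _)
  have h2 := Finset.card_le_card h1
  rw [Finset.card_erase_of_mem (Finset.mem_univ j), Finset.card_univ, Fintype.card_fin] at h2
  have hm : 0 < m := j.pos
  calc rnk v j ≤ m - 1 := h2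
  _ < m := by omega

theorem card_rnk_lt {m : ℕ} (v : Fin m → ℝ) (hv : Function.Injective v) (k : ℕ) (hk : k ≤ m) :
    (Finset.univ.filter (fun j => rnk v j < k)).card = k := by
  classical
  set e : Fin m → Fin m := fun j => ⟨rnk v j, rnk_lt v j⟩ with he
  have hinj : Function.Injective e := by
    intro i j h
    simp only [he, Fin.mk.injEq] at h
    rcases lt_trichotomy (v i) (v j) with h' | h' | h'
    · exact absurd h (Nat.ne_of_lt (rnk_lt_rnk v h'))
    · exact hv h'
    · exact absurd h.symm (Nat.ne_of_lt (rnk_lt_rnk v h'))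
  have hbij : Function.Bijective e := Finite.injective_iff_bijective.1 hinj
  have hcard : (Finset.univ.filter (fun j => rnk v j < k)).card
      = (Finset.univ.filter (fun r : Fin m => (r : ℕ) < k)).card := by
    apply Finset.card_bij (fun j _ => e j)
    · intro a ha
      simp only [Finset.mem_filter, Finset.mem_univ, true_and] at *
      exact ha
    · intro a ha b hb h
      exact hinj h
    · intro b hb
      obtain ⟨a, rfl⟩ := hbij.2 b
      simp only [Finset.mem_filter, Finset.mem_univ, true_and] at hb
      exact ⟨a, by simpa using hb, rfl⟩
  rw [hcard]
  rcases Nat.eq_or_lt_of_le hk with rfl | hlt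
  · rw [Finset.filter_true_of_mem (fun r _ => r.isLt), Finset.card_univ, Fintype.card_fin]
  · have : Finset.univ.filter (fun r : Fin m => (r : ℕ) < k) = Finset.Iio ⟨k, hlt⟩ := by
      ext r; simp [Fin.lt_def]
    rw [this, Fin.card_Iio]

theorem rnk_comp_perm {m : ℕ} (v : Fin m → ℝ) (π : Equiv.Perm (Fin m)) (j : Fin m) :
    rnk (fun i => v (π i)) j = rnk v (π j) := by
  classical
  unfold rnk
  apply Finset.card_bij (fun i _ => π i)
  · intro a ha; simpa using (by simpa using ha : v (π a) < v (π j))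
  · intro a _ b _ h; exact π.injective h
  · intro b hb
    refine ⟨π.symm b, by simpa using (by simpa using hb : v b < v (π j)), by simp⟩

/-- Marginal split conformal coverage, Theorem 1: For exchangeable,
a.s. pairwise distinct scores `S 0, …, S N` (calibration scores `S 0, …, S (N-1)` and
test score `S (Fin.last N)`), with `α ∈ (0,1)` such that `⌈(N+1)(1-α)⌉ ≤ N`, the
conformal quantile `q_α = S_(⌈(N+1)(1-α)⌉)` (order statistic of the calibration scores)
satisfies the tight coverage bound
`1 - α ≤ ℙ(S_{N+1} ≤ q_α) ≤ 1 - α + 1 / (N + 1)`. -/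
theorem marginal_split_conformal_coverage
    {Ω : Type*} [MeasurableSpace Ω] (P : Measure Ω) [IsProbabilityMeasure P]
    (N : ℕ) (hN : 1 ≤ N) (α : ℝ) (hα0 : 0 < α) (hα1 : α < 1)
    (hk : ⌈((N : ℝ) + 1) * (1 - α)⌉ ≤ (N : ℤ))
    (S : Fin (N + 1) → Ω → ℝ)
    (hmeas : ∀ i, Measurable (S i))
    (hexch : ∀ π : Equiv.Perm (Fin (N + 1)),
      Measure.map (fun ω => fun i => S (π i) ω) P
        = Measure.map (fun ω => fun i => S i ω) P)
    (hdist : ∀ i j, i ≠ j → P {ω | S i ω = S j ω} = 0) :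
    1 - α ≤ (P {ω | S (Fin.last N) ω ≤
        orderStat (fun i : Fin N => S i.castSucc ω) (⌈((N : ℝ) + 1) * (1 - α)⌉).toNat}).toReal ∧
      (P {ω | S (Fin.last N) ω ≤
        orderStat (fun i : Fin N => S i.castSucc ω) (⌈((N : ℝ) + 1) * (1 - α)⌉).toNat}).toReal
        ≤ 1 - α + 1 / ((N : ℝ) + 1) := by
  classical
  set k : ℕ := (⌈((N : ℝ) + 1) * (1 - α)⌉).toNat with hkdef
  have hy : (0 : ℝ) < ((N : ℝ) + 1) * (1 - α) := by nlinarith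
  have hceil_pos : 0 < ⌈((N : ℝ) + 1) * (1 - α)⌉ := Int.ceil_pos.2 hy
  have hk1 : 1 ≤ k := by omega
  have hk2 : k ≤ N := by omega
  have hkcast : (k : ℝ) = (⌈((N : ℝ) + 1) * (1 - α)⌉ : ℤ) := by
    rw [hkdef]; exact_mod_cast Int.toNat_of_nonneg hceil_pos.le
  have hklb : ((N : ℝ) + 1) * (1 - α) ≤ (k : ℝ) := by
    rw [hkcast]; exact Int.le_ceil _
  have hkub : (k : ℝ) < ((N : ℝ) + 1) * (1 - α) + 1 := by
    rw [hkcast]; exact_mod_cast Int.ceil_lt_add_one _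
  -- rank-based events
  set A : Fin (N + 1) → Set Ω := fun j => {ω | rnk (fun i => S i ω) j < k} with hA
  -- measurability of rank functions
  have hrnkmeas : ∀ j : Fin (N + 1), Measurable (fun ω => rnk (fun i => S i ω) j) := by
    intro j
    have : (fun ω => rnk (fun i => S i ω) j)
        = fun ω => ∑ i : Fin (N + 1), if S i ω < S j ω then 1 else 0 := by
      funext ω; rw [rnk, Finset.card_filter]
    rw [this]
    exact Finset.measurable_sum _ fun i _ =>
      Measurable.ite (measurableSet_lt (hmeas i) (hmeas j)) measurable_const measurable_const
  have hAmeas : ∀ j, MeasurableSet (A j) := by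
    intro j
    exact (hrnkmeas j) (measurableSet_Iio (a := k))
  -- the event in the statement equals A (Fin.last N)
  have hE : {ω | S (Fin.last N) ω ≤
      orderStat (fun i : Fin N => S i.castSucc ω) k} = A (Fin.last N) := by
    ext ω
    exact le_orderStat_iff (fun i => S i ω) k hk1 hk2
  -- exchangeability: all A j have the same measure
  have hsame : ∀ j : Fin (N + 1), P (A j) = P (A (Fin.last N)) := by
    intro j
    set π : Equiv.Perm (Fin (N + 1)) := Equiv.swap j (Fin.last N) with hπ
    have hGmeas : Measurable (fun v : Fin (N + 1) → ℝ => rnk v (Fin.last N)) := by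
      have : (fun v : Fin (N + 1) → ℝ => rnk v (Fin.last N))
          = fun v => ∑ i : Fin (N + 1), if v i < v (Fin.last N) then 1 else 0 := by
        funext v; rw [rnk, Finset.card_filter]
      rw [this]
      exact Finset.measurable_sum _ fun i _ =>
        Measurable.ite (measurableSet_lt (measurable_pi_apply i) (measurable_pi_apply _))
          measurable_const measurable_const
    have hB : MeasurableSet {v : Fin (N + 1) → ℝ | rnk v (Fin.last N) < k} :=
      hGmeas (measurableSet_Iio (a := k))
    have hf : Measurable (fun ω => fun i => S (π i) ω) :=
      measurable_pi_lambda _ fun i => hmeas (π i)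
    have hg : Measurable (fun ω => fun i => S i ω) :=
      measurable_pi_lambda _ fun i => hmeas i
    have h1 := hexch π
    have h2 : P ((fun ω => fun i => S (π i) ω) ⁻¹' {v | rnk v (Fin.last N) < k})
        = P ((fun ω => fun i => S i ω) ⁻¹' {v | rnk v (Fin.last N) < k}) := by
      rw [← Measure.map_apply hf hB, ← Measure.map_apply hg hB, h1]
    have h3 : (fun ω => fun i => S (π i) ω) ⁻¹' {v | rnk v (Fin.last N) < k} = A j := by
      ext ω
      simp only [Set.mem_preimage, Set.mem_setOf_eq, hA]
      rw [rnk_comp_perm (fun i => S i ω) π (Fin.last N)]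
      rw [hπ, Equiv.swap_apply_right]
    have h4 : (fun ω => fun i => S i ω) ⁻¹' {v | rnk v (Fin.last N) < k} = A (Fin.last N) := rfl
    rw [h3, h4] at h2
    exact h2
  -- a.s. injectivity
  set D : Set Ω := {ω | Function.Injective (fun i => S i ω)} with hD
  have hDc : Dᶜ = ⋃ (i : Fin (N+1)) (j : Fin (N+1)) (_ : i ≠ j), {ω | S i ω = S j ω} := by
    ext ω
    simp only [Set.mem_compl_iff, hD, Set.mem_setOf_eq, Set.mem_iUnion, Function.Injective]
    constructor
    · intro h
      push_neg at h
      obtain ⟨i, j, hij, hne⟩ := h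
      exact ⟨i, j, hne, hij⟩
    · rintro ⟨i, j, hne, hij⟩ h
      exact hne (h hij)
  have hDcnull : P Dᶜ = 0 := by
    rw [hDc]
    refine measure_iUnion_null fun i => measure_iUnion_null fun j => measure_iUnion_null fun h => ?_
    exact hdist i j h
  have hDmeas : MeasurableSet D := by
    rw [← compl_compl D, hDc]
    exact (MeasurableSet.iUnion fun i => MeasurableSet.iUnion fun j =>
      MeasurableSet.iUnion fun _ => measurableSet_eq_fun (hmeas i) (hmeas j)).compl
  have hPD : P D = 1 := (prob_compl_eq_zero_iff hDmeas).1 hDcnull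
  -- key counting identity: sum of measures equals k
  have hsum : ∑ j : Fin (N + 1), P (A j ∩ D) = (k : ℝ≥0∞) * P D := by
    have hmeasAD : ∀ j : Fin (N + 1), MeasurableSet (A j ∩ D) :=
      fun j => (hAmeas j).inter hDmeas
    calc ∑ j : Fin (N + 1), P (A j ∩ D)
        = ∑ j : Fin (N + 1), ∫⁻ ω, (A j ∩ D).indicator (fun _ => (1 : ℝ≥0∞)) ω ∂P := by
          refine Finset.sum_congr rfl fun j _ => ?_
          rw [lintegral_indicator_const (hmeasAD j), one_mul]
      _ = ∫⁻ ω, ∑ j : Fin (N + 1), (A j ∩ D).indicator (fun _ => (1 : ℝ≥0∞)) ω ∂P := by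
          rw [lintegral_finset_sum]
          intro j _
          exact (measurable_const.indicator (hmeasAD j))
      _ = ∫⁻ ω, D.indicator (fun _ => (k : ℝ≥0∞)) ω ∂P := by
          congr 1
          funext ω
          by_cases hω : ω ∈ D
          · rw [Set.indicator_of_mem hω]
            have hcard := card_rnk_lt (fun i => S i ω) hω k (by omega)
            calc ∑ j : Fin (N + 1), (A j ∩ D).indicator (fun _ => (1 : ℝ≥0∞)) ω
                = ∑ j : Fin (N + 1), if rnk (fun i => S i ω) j < k then (1 : ℝ≥0∞) else 0 := by
                  refine Finset.sum_congr rfl fun j _ => ?_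
                  by_cases hj : rnk (fun i => S i ω) j < k
                  · rw [if_pos hj, Set.indicator_of_mem (s := A j ∩ D) ⟨hj, hω⟩]
                  · rw [if_neg hj, Set.indicator_of_notMem]
                    rintro ⟨h1, _⟩
                    exact hj h1
              _ = ((Finset.univ.filter (fun j => rnk (fun i => S i ω) j < k)).card : ℝ≥0∞) := by
                  rw [Finset.card_filter]
                  push_cast
                  rfl
              _ = (k : ℝ≥0∞) := by rw [hcard]
          · rw [Set.indicator_of_notMem hω]
            refine Finset.sum_eq_zero fun j _ => ?_
            rw [Set.indicator_of_notMem]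
            rintro ⟨_, h2⟩
            exact hω h2
      _ = (k : ℝ≥0∞) * P D := lintegral_indicator_const hDmeas _
  have hAD : ∀ j, P (A j ∩ D) = P (A j) := fun j => measure_inter_conull hDcnull
  have hmain : ((N : ℝ≥0∞) + 1) * P (A (Fin.last N)) = (k : ℝ≥0∞) := by
    have h1 : ∑ j : Fin (N + 1), P (A j) = (k : ℝ≥0∞) := by
      rw [hPD, mul_one] at hsum
      rw [← hsum]
      exact Finset.sum_congr rfl fun j _ => (hAD j).symm
    have h2 : ∑ j : Fin (N + 1), P (A j) = (N + 1 : ℕ) • P (A (Fin.last N)) := by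
      rw [Finset.sum_congr rfl fun j _ => hsame j, Finset.sum_const, Finset.card_univ,
        Fintype.card_fin]
    rw [h2, nsmul_eq_mul] at h1
    rw [← h1]
    push_cast
    ring_nf
  -- pass to real numbers
  have hfin : P (A (Fin.last N)) ≠ ⊤ := measure_ne_top _ _
  have ht : ((N : ℝ) + 1) * (P (A (Fin.last N))).toReal = (k : ℝ) := by
    have h := congrArg ENNReal.toReal hmain
    rw [ENNReal.toReal_mul, ENNReal.toReal_add (ENNReal.natCast_ne_top N) ENNReal.one_ne_top] at h
    simpa using h
  have hpos : (0 : ℝ) < (N : ℝ) + 1 := by positivity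
  have hone : ((N : ℝ) + 1) * (1 / ((N : ℝ) + 1)) = 1 := by field_simp
  rw [hE]
  constructor
  · nlinarith [ht, hklb, hpos]
  · nlinarith [ht, hkub, hpos, hone]
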